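/- Let two Grassmannian configurations be given by projections {Π_{1,i}} in G_{m₁,n₁} and {Π_{2,j}} in G_{m₂,n₂} with minimal squared chordal distances d₁² and d₂². Then the Kronecker products {Π_{1,i} ⊗ Π_{2,j}} form a configuration in G_{m₁m₂, n₁n₂} whose minimal squared chordal distance equals min(m₁·d₂², m₂·d₁²). -/

import Mathlib

open scoped Matrix

/-- Orthogonal projection onto a subspace, as an endomorphism. -/
noncomputable def proj {n : ℕ} (W : Submodule ℂ (EuclideanSpace ℂ (Fin n))) :
    EuclideanSpace ℂ (Fin n) →ₗ[ℂ] EuclideanSpace ℂ (Fin n) :=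
  W.subtype ∘ₗ W.orthogonalProjectionOnto.toLinearMap

/-- Squared chordal distance between two subspaces:
`Trace(Π_P) - Trace(Π_P Π_Q)`. -/
noncomputable def dc2 {n : ℕ} (P Q : Submodule ℂ (EuclideanSpace ℂ (Fin n))) : ℝ :=
  (LinearMap.trace ℂ _ (proj P) - LinearMap.trace ℂ _ (proj P ∘ₗ proj Q)).re

/-- The action of a group element on `ℂⁿ` through a unitary representation. -/
noncomputable def act {n : ℕ} {G : Type*} [Group G]
    (ρ : G →* Matrix.unitaryGroup (Fin n) ℂ) (g : G) :
    EuclideanSpace ℂ (Fin n) →ₗ[ℂ] EuclideanSpace ℂ (Fin n) :=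
  Matrix.toEuclideanLin (ρ g : Matrix (Fin n) (Fin n) ℂ)

/-- Irreducibility of a unitary matrix representation. -/
def IsIrred {n : ℕ} {G : Type*} [Group G] (ρ : G →* Matrix.unitaryGroup (Fin n) ℂ) : Prop :=
  ∀ U : Submodule ℂ (EuclideanSpace ℂ (Fin n)), (∀ g : G, U.map (act ρ g) ≤ U) → U = ⊥ ∨ U = ⊤

/-- The character of a unitary matrix representation. -/
noncomputable def charOf {n : ℕ} {G : Type*} [Group G]
    (ρ : G →* Matrix.unitaryGroup (Fin n) ℂ) (g : G) : ℂ :=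
  (ρ g : Matrix (Fin n) (Fin n) ℂ).trace

/-- `χ` is the character of some irreducible unitary representation of `G`. -/
def IsIrredChar {G : Type*} [Group G] (χ : G → ℂ) : Prop :=
  ∃ (d : ℕ) (σ : G →* Matrix.unitaryGroup (Fin d) ℂ), IsIrred σ ∧ ∀ g, χ g = charOf σ g

/-- Two pairs of subspaces have the same set of principal angles iff they are in the same
orbit of the unitary group. -/
def samePA {n : ℕ} (P Q P' Q' : Submodule ℂ (EuclideanSpace ℂ (Fin n))) : Prop :=
  ∃ U : EuclideanSpace ℂ (Fin n) ≃ₗᵢ[ℂ] EuclideanSpace ℂ (Fin n),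
    P.map U.toLinearEquiv.toLinearMap = P' ∧ Q.map U.toLinearEquiv.toLinearMap = Q'

/-- The isotypic subspace of a unitary representation `ρ` of `H` associated to a character
`χ` : the sum of all `H`-invariant subspaces on which the representation has character `χ`. -/
noncomputable def isotypic {n : ℕ} {H : Type*} [Group H]
    (ρ : H →* Matrix.unitaryGroup (Fin n) ℂ) (χ : H → ℂ) :
    Submodule ℂ (EuclideanSpace ℂ (Fin n)) :=
  sSup {U : Submodule ℂ (EuclideanSpace ℂ (Fin n)) |
    ∃ hU : ∀ (h : H), ∀ x ∈ U, act ρ h x ∈ U,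
      ∀ h : H, LinearMap.trace ℂ U ((act ρ h).restrict (hU h)) = χ h}

/-- Squared chordal distance in terms of projection matrices. -/
noncomputable def dc2M {ι : Type*} [Fintype ι] (P Q : Matrix ι ι ℂ) : ℝ :=
  (P.trace - (P * Q).trace).re

private lemma stmt12.key {n : ℕ} (P Q : Matrix (Fin n) (Fin n) ℂ) (hP : P.IsHermitian)
    (hQ : Q.IsHermitian) (hP2 : P * P = P) (hQ2 : Q * Q = Q) :
    (P * Q).trace = (((P * Q).trace.re : ℝ) : ℂ) ∧ 0 ≤ (P * Q).trace.re := by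
  have h1 : (P * Q)ᴴ = Q * P := by rw [Matrix.conjTranspose_mul, hP.eq, hQ.eq]
  have h2 : (P * Q).trace = ((P * Q) * (P * Q)ᴴ).trace := by
    rw [h1]
    have e : (P * Q) * (Q * P) = P * Q * P := by
      rw [Matrix.mul_assoc, ← Matrix.mul_assoc Q Q P, hQ2, ← Matrix.mul_assoc]
    have e2 : (P * Q * P).trace = (P * Q).trace := by
      rw [Matrix.trace_mul_cycle, hP2]
    rw [e, e2]
  have h3 : ((P*Q) * (P*Q)ᴴ).trace = ((∑ i, ∑ j, Complex.normSq ((P*Q) i j) : ℝ) : ℂ) := by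
    push_cast
    simp [Matrix.trace, Matrix.diag, Matrix.mul_apply, Matrix.conjTranspose_apply,
      ← Complex.mul_conj, mul_comm]
  rw [h2, h3]
  refine ⟨by norm_num, ?_⟩
  rw [Complex.ofReal_re]
  exact Finset.sum_nonneg fun i _ => Finset.sum_nonneg fun j _ => Complex.normSq_nonneg _

private lemma stmt12.key2 {n : ℕ} (P Q : Matrix (Fin n) (Fin n) ℂ) (hP : P.IsHermitian)
    (hQ : Q.IsHermitian) (hP2 : P * P = P) (hQ2 : Q * Q = Q) :
    (P * Q).trace.re ≤ P.trace.re := by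
  have hQ' : (1 - Q).IsHermitian := Matrix.isHermitian_one.sub hQ
  have hQ2' : (1 - Q) * (1 - Q) = 1 - Q := by
    rw [sub_mul, one_mul, mul_sub, mul_one, hQ2]; abel
  have h := (stmt12.key P (1 - Q) hP hQ' hP2 hQ2').2
  have e : (P * (1 - Q)).trace = P.trace - (P * Q).trace := by
    rw [mul_sub, mul_one, Matrix.trace_sub]
  rw [e, Complex.sub_re] at h
  linarith

open Kronecker in
/-- Kronecker products of two Grassmannian configurations with minimal
squared chordal distances `d₁², d₂²` form a configuration in `G_{m₁m₂,n₁n₂}` with minimal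
squared chordal distance `min(m₁·d₂², m₂·d₁²)`. -/
theorem stmt12 {n₁ n₂ m₁ m₂ N₁ N₂ : ℕ} (d₁ d₂ : ℝ)
    (P₁ : Fin N₁ → Matrix (Fin n₁) (Fin n₁) ℂ) (P₂ : Fin N₂ → Matrix (Fin n₂) (Fin n₂) ℂ)
    (hherm₁ : ∀ i, (P₁ i).IsHermitian) (hidem₁ : ∀ i, P₁ i * P₁ i = P₁ i)
    (htr₁ : ∀ i, (P₁ i).trace = (m₁ : ℂ)) (hdist₁ : ∀ i j, i ≠ j → P₁ i ≠ P₁ j)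
    (hherm₂ : ∀ i, (P₂ i).IsHermitian) (hidem₂ : ∀ i, P₂ i * P₂ i = P₂ i)
    (htr₂ : ∀ i, (P₂ i).trace = (m₂ : ℂ)) (hdist₂ : ∀ i j, i ≠ j → P₂ i ≠ P₂ j)
    (hmin₁ : (∀ i j, i ≠ j → d₁ ≤ dc2M (P₁ i) (P₁ j)) ∧
      ∃ i j, i ≠ j ∧ dc2M (P₁ i) (P₁ j) = d₁)
    (hmin₂ : (∀ i j, i ≠ j → d₂ ≤ dc2M (P₂ i) (P₂ j)) ∧
      ∃ i j, i ≠ j ∧ dc2M (P₂ i) (P₂ j) = d₂) :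
    (∀ p q : Fin N₁ × Fin N₂, p ≠ q →
      min ((m₁ : ℝ) * d₂) ((m₂ : ℝ) * d₁) ≤ dc2M (P₁ p.1 ⊗ₖ P₂ p.2) (P₁ q.1 ⊗ₖ P₂ q.2)) ∧
    (∃ p q : Fin N₁ × Fin N₂, p ≠ q ∧
      dc2M (P₁ p.1 ⊗ₖ P₂ p.2) (P₁ q.1 ⊗ₖ P₂ q.2) = min ((m₁ : ℝ) * d₂) ((m₂ : ℝ) * d₁)) := by
  obtain ⟨hlb₁, i₁, j₁, hij₁, heq₁⟩ := hmin₁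
  obtain ⟨hlb₂, p₂, q₂, hpq₂, heq₂⟩ := hmin₂
  set a : Fin N₁ → Fin N₁ → ℝ := fun i j => ((P₁ i * P₁ j).trace).re with ha_def
  set b : Fin N₂ → Fin N₂ → ℝ := fun p q => ((P₂ p * P₂ q).trace).re with hb_def
  have key₁ := fun i j => stmt12.key (P₁ i) (P₁ j) (hherm₁ i) (hherm₁ j) (hidem₁ i) (hidem₁ j)
  have key₂ := fun p q => stmt12.key (P₂ p) (P₂ q) (hherm₂ p) (hherm₂ q) (hidem₂ p) (hidem₂ q)
  have ha0 : ∀ i j, 0 ≤ a i j := fun i j => (key₁ i j).2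
  have hb0 : ∀ p q, 0 ≤ b p q := fun p q => (key₂ p q).2
  have haM : ∀ i j, a i j ≤ (m₁ : ℝ) := by
    intro i j
    have := stmt12.key2 (P₁ i) (P₁ j) (hherm₁ i) (hherm₁ j) (hidem₁ i) (hidem₁ j)
    rwa [htr₁ i, Complex.natCast_re] at this
  have hbM : ∀ p q, b p q ≤ (m₂ : ℝ) := by
    intro p q
    have := stmt12.key2 (P₂ p) (P₂ q) (hherm₂ p) (hherm₂ q) (hidem₂ p) (hidem₂ q)
    rwa [htr₂ p, Complex.natCast_re] at this
  have hd₁ : ∀ i j, dc2M (P₁ i) (P₁ j) = (m₁ : ℝ) - a i j := by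
    intro i j
    simp [dc2M, htr₁ i, Complex.sub_re, ha_def]
  have hd₂ : ∀ p q, dc2M (P₂ p) (P₂ q) = (m₂ : ℝ) - b p q := by
    intro p q
    simp [dc2M, htr₂ p, Complex.sub_re, hb_def]
  have haa : ∀ i, a i i = (m₁ : ℝ) := by
    intro i; simp [ha_def, hidem₁ i, htr₁ i]
  have hbb : ∀ p, b p p = (m₂ : ℝ) := by
    intro p; simp [hb_def, hidem₂ p, htr₂ p]
  have hk : ∀ (i j : Fin N₁) (p q : Fin N₂),
      dc2M (P₁ i ⊗ₖ P₂ p) (P₁ j ⊗ₖ P₂ q) = (m₁ : ℝ) * (m₂ : ℝ) - a i j * b p q := by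
    intro i j p q
    unfold dc2M
    rw [← Matrix.mul_kronecker_mul, Matrix.trace_kronecker, Matrix.trace_kronecker,
      htr₁ i, htr₂ p, (key₁ i j).1, (key₂ p q).1]
    simp [Complex.sub_re, Complex.mul_re, ha_def, hb_def]
  have hm₁ : (0:ℝ) ≤ (m₁ : ℝ) := Nat.cast_nonneg _
  have hm₂ : (0:ℝ) ≤ (m₂ : ℝ) := Nat.cast_nonneg _
  constructor
  · rintro ⟨i, p⟩ ⟨j, q⟩ hne
    rw [hk]
    by_cases hij : i = j
    · have hpq : p ≠ q := by
        intro h; exact hne (by simp [Prod.ext_iff, hij, h])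
      have hd : d₂ ≤ (m₂ : ℝ) - b p q := by
        have := hlb₂ p q hpq; rwa [hd₂] at this
      subst hij
      rw [haa]
      have h1 : min ((m₁ : ℝ) * d₂) ((m₂ : ℝ) * d₁) ≤ (m₁ : ℝ) * d₂ := min_le_left _ _
      nlinarith [mul_le_mul_of_nonneg_left hd hm₁]
    · have hd : d₁ ≤ (m₁ : ℝ) - a i j := by
        have := hlb₁ i j hij; rwa [hd₁] at this
      have h1 : min ((m₁ : ℝ) * d₂) ((m₂ : ℝ) * d₁) ≤ (m₂ : ℝ) * d₁ := min_le_right _ _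
      nlinarith [mul_le_mul_of_nonneg_left hd hm₂,
        mul_le_mul_of_nonneg_left (hbM p q) (ha0 i j)]
  · rcases le_total ((m₁ : ℝ) * d₂) ((m₂ : ℝ) * d₁) with hle | hle
    · refine ⟨(i₁, p₂), (i₁, q₂), ?_, ?_⟩
      · simp [Prod.ext_iff, hpq₂]
      · rw [hk, haa, min_eq_left hle]
        have hb' : b p₂ q₂ = (m₂ : ℝ) - d₂ := by
          have := heq₂; rw [hd₂] at this; linarith
        rw [hb']; ring
    · refine ⟨(i₁, p₂), (j₁, p₂), ?_, ?_⟩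
      · simp [Prod.ext_iff, hij₁]
      · rw [hk, hbb, min_eq_right hle]
        have ha' : a i₁ j₁ = (m₁ : ℝ) - d₁ := by
          have := heq₁; rw [hd₁] at this; linarith
        rw [ha']; ring
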